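/- Let p_n ∈ (0,1) denote the unique fixed point of P_n in (0,1), i.e. the unique solution of p_n = binom(n, n·p_n)·p_n^(n·p_n)·(1-p_n)^(n(1-p_n)). Then p_n ~ (2πn)^{-1/3} as n → ∞, i.e. lim_{n→∞} p_n·(2πn)^{1/3} = 1. -/

import Mathlib

open Real Filter Topology

/-- Generalized binomial coefficient `binom(n, α) = n! / (Γ(α+1)·Γ(n-α+1))`. -/
noncomputable def gbinom (n : ℕ) (a : ℝ) : ℝ :=
  (n.factorial : ℝ) / (Real.Gamma (a + 1) * Real.Gamma ((n : ℝ) - a + 1))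

/-- The function `P_n(p) = binom(n, np) · p^(np) · (1-p)^(n(1-p))`. -/
noncomputable def Pn (n : ℕ) (p : ℝ) : ℝ :=
  gbinom n ((n : ℝ) * p) * p ^ ((n : ℝ) * p) * (1 - p) ^ ((n : ℝ) * (1 - p))

/-- Stirling ratio for the Gamma function: `G x = Γ(x+1) eˣ / (xˣ √x)`. -/
noncomputable def Gfun (x : ℝ) : ℝ := Real.Gamma (x + 1) * Real.exp x / (x ^ x * Real.sqrt x)

lemma Gfun_pos {x : ℝ} (hx : 0 < x) : 0 < Gfun x := by
  have h1 : 0 < Real.Gamma (x + 1) := Real.Gamma_pos_of_pos (by linarith)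
  have h2 : (0:ℝ) < x ^ x := Real.rpow_pos_of_pos hx x
  have h3 : 0 < Real.sqrt x := Real.sqrt_pos.mpr hx
  rw [Gfun]
  positivity

lemma Gamma_eq_Gfun {x : ℝ} (hx : 0 < x) :
    Real.Gamma (x + 1) = Gfun x * (x ^ x * Real.sqrt x) / Real.exp x := by
  have h2 : (0:ℝ) < x ^ x := Real.rpow_pos_of_pos hx x
  have h3 : 0 < Real.sqrt x := Real.sqrt_pos.mpr hx
  rw [Gfun]
  field_simp

set_option maxHeartbeats 1000000 in
lemma Pn_eq (n : ℕ) (hn : 0 < n) {x : ℝ} (hx0 : 0 < x) (hx1 : x < 1) :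
    Pn n x = Gfun n / (Gfun (n * x) * Gfun (n * (1 - x)) * Real.sqrt (n * x * (1 - x))) := by
  have hn' : (0:ℝ) < n := Nat.cast_pos.mpr hn
  have ha0 : (0:ℝ) < n * x := by positivity
  have hb0 : (0:ℝ) < n * (1 - x) := by
    have : (0:ℝ) < 1 - x := by linarith
    positivity
  have hab : (n:ℝ) * x + n * (1 - x) = n := by ring
  have hfac : (n.factorial : ℝ) = Real.Gamma (n + 1) := (Real.Gamma_nat_eq_factorial n).symm
  have hrw : (n:ℝ) - n * x + 1 = n * (1 - x) + 1 := by ring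
  rw [Pn, gbinom, hfac, hrw]
  rw [Gamma_eq_Gfun hn', Gamma_eq_Gfun ha0, Gamma_eq_Gfun hb0]
  have hGn := Gfun_pos hn'
  have hGa := Gfun_pos ha0
  have hGb := Gfun_pos hb0
  have hxa : x = (n * x) / n := by field_simp
  have hx1b : 1 - x = (n * (1 - x)) / n := by field_simp
  have hxx : x ^ ((n:ℝ) * x) = (n * x) ^ ((n:ℝ) * x) / (n:ℝ) ^ ((n:ℝ) * x) := by
    nth_rewrite 1 [hxa]; rw [Real.div_rpow ha0.le hn'.le]
  have hyy : (1 - x) ^ ((n:ℝ) * (1 - x))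
      = (n * (1 - x)) ^ ((n:ℝ) * (1 - x)) / (n:ℝ) ^ ((n:ℝ) * (1 - x)) := by
    nth_rewrite 1 [hx1b]; rw [Real.div_rpow hb0.le hn'.le]
  have hnab : (n:ℝ) ^ ((n:ℝ) * x) * (n:ℝ) ^ ((n:ℝ) * (1 - x)) = (n:ℝ) ^ ((n:ℝ)) := by
    rw [← Real.rpow_add hn', hab]
  have heab : Real.exp ((n:ℝ) * x) * Real.exp ((n:ℝ) * (1 - x)) = Real.exp (n:ℝ) := by
    rw [← Real.exp_add, hab]
  have hsab : Real.sqrt (n * x * (1 - x))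
      = Real.sqrt (n * x) * Real.sqrt (n * (1 - x)) / Real.sqrt n := by
    rw [← Real.sqrt_mul ha0.le, ← Real.sqrt_div' _ hn'.le]
    congr 1
    field_simp
  rw [hxx, hyy, hsab]
  have hpa : (0:ℝ) < (n * x : ℝ) ^ ((n:ℝ) * x) := Real.rpow_pos_of_pos ha0 _
  have hpb : (0:ℝ) < (n * (1 - x) : ℝ) ^ ((n:ℝ) * (1 - x)) := Real.rpow_pos_of_pos hb0 _
  have hpn : (0:ℝ) < (n:ℝ) ^ ((n:ℝ)) := Real.rpow_pos_of_pos hn' _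
  have hsa : 0 < Real.sqrt (n * x) := Real.sqrt_pos.mpr ha0
  have hsb : 0 < Real.sqrt (n * (1 - x)) := Real.sqrt_pos.mpr hb0
  have hsn : 0 < Real.sqrt (n:ℝ) := Real.sqrt_pos.mpr hn'
  have hea : (0:ℝ) < Real.exp ((n:ℝ) * x) := Real.exp_pos _
  have heb : (0:ℝ) < Real.exp ((n:ℝ) * (1 - x)) := Real.exp_pos _
  rw [← hnab, ← heab]
  set A := (n:ℝ) ^ ((n:ℝ) * x) with hA
  set B := (n:ℝ) ^ ((n:ℝ) * (1 - x)) with hB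
  set C := ((n:ℝ) * x) ^ ((n:ℝ) * x) with hC
  set D := ((n:ℝ) * (1 - x)) ^ ((n:ℝ) * (1 - x)) with hD
  set Ga := Gfun ((n:ℝ) * x) with hGa'
  set Gb := Gfun ((n:ℝ) * (1 - x)) with hGb'
  set sa := Real.sqrt ((n:ℝ) * x) with hsa'
  set sb := Real.sqrt ((n:ℝ) * (1 - x)) with hsb'
  set ea := Real.exp ((n:ℝ) * x) with hea'
  set eb := Real.exp ((n:ℝ) * (1 - x)) with heb'
  have hA0 : A ≠ 0 := (Real.rpow_pos_of_pos hn' _).ne'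
  have hB0 : B ≠ 0 := (Real.rpow_pos_of_pos hn' _).ne'
  have hC0 : C ≠ 0 := hpa.ne'
  have hD0 : D ≠ 0 := hpb.ne'
  have hGa0 : Ga ≠ 0 := hGa.ne'
  have hGb0 : Gb ≠ 0 := hGb.ne'
  have hsa0 : sa ≠ 0 := hsa.ne'
  have hsb0 : sb ≠ 0 := hsb.ne'
  have hsn0 : Real.sqrt (n:ℝ) ≠ 0 := hsn.ne'
  have hea0 : ea ≠ 0 := hea.ne'
  have heb0 : eb ≠ 0 := heb.ne'
  field_simp

/-- Log-convexity sandwich: for `x ≥ 1` with `m = ⌊x⌋`, `s = x - m`,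
`s·log m ≤ log Γ(x+1) - log m! ≤ s·log(m+1)`. -/
lemma logGamma_bounds {x : ℝ} (hx : 1 ≤ x) :
    (x - ⌊x⌋₊) * Real.log ⌊x⌋₊ ≤ Real.log (Real.Gamma (x + 1)) - Real.log (⌊x⌋₊).factorial ∧
    Real.log (Real.Gamma (x + 1)) - Real.log (⌊x⌋₊).factorial
      ≤ (x - ⌊x⌋₊) * Real.log ((⌊x⌋₊ : ℝ) + 1) := by
  set m : ℕ := ⌊x⌋₊ with hm
  have hx0 : (0:ℝ) ≤ x := by linarith
  have hm1 : 1 ≤ m := Nat.le_floor (by exact_mod_cast hx)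
  have hm0 : (0:ℝ) < m := by exact_mod_cast hm1
  have hmx : (m:ℝ) ≤ x := Nat.floor_le hx0
  have hxm : x < m + 1 := Nat.lt_floor_add_one x
  have hΓm : Real.Gamma ((m:ℝ) + 1) = m.factorial := Real.Gamma_nat_eq_factorial m
  rcases eq_or_lt_of_le hmx with heq | hlt
  · rw [← heq, hΓm]
    simp
  · have hs0 : 0 < x - m := by linarith
    set f : ℝ → ℝ := Real.log ∘ Real.Gamma with hf
    have hconv : ConvexOn ℝ (Set.Ioi 0) f := Real.convexOn_log_Gamma
    have hmem1 : (m:ℝ) ∈ Set.Ioi (0:ℝ) := hm0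
    have hmema : (m:ℝ) + 1 ∈ Set.Ioi (0:ℝ) := by simp; linarith
    have hmemx : x + 1 ∈ Set.Ioi (0:ℝ) := by simp; linarith
    have hmem2 : (m:ℝ) + 2 ∈ Set.Ioi (0:ℝ) := by simp; linarith
    -- slopes through a := m+1
    have hslope1 := hconv.secant_mono hmema hmem1 hmemx (by linarith) (by linarith)
      (by linarith)
    have hslope2 := hconv.secant_mono hmema hmemx hmem2 (by linarith) (by linarith)
      (by linarith)
    have hfa : f ((m:ℝ) + 1) = Real.log (m.factorial) := by
      simp only [hf, Function.comp_apply, hΓm]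
    have hfm : f ((m:ℝ) + 1) - f (m:ℝ) = Real.log m := by
      simp only [hf, Function.comp_apply]
      rw [Real.Gamma_add_one hm0.ne']
      rw [Real.log_mul hm0.ne' (Real.Gamma_pos_of_pos hm0).ne']
      ring
    have hfm2 : f ((m:ℝ) + 2) - f ((m:ℝ) + 1) = Real.log ((m:ℝ) + 1) := by
      simp only [hf, Function.comp_apply]
      have : (m:ℝ) + 2 = ((m:ℝ) + 1) + 1 := by ring
      rw [this, Real.Gamma_add_one (by positivity : (m:ℝ) + 1 ≠ 0)]
      rw [Real.log_mul (by positivity) (Real.Gamma_pos_of_pos (by positivity)).ne']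
      ring
    have e1 : ((f (m:ℝ)) - f ((m:ℝ)+1)) / ((m:ℝ) - ((m:ℝ)+1)) = Real.log m := by
      rw [show ((m:ℝ) - ((m:ℝ)+1)) = -1 by ring]
      rw [div_neg, div_one]
      linarith [hfm]
    have e2 : ((f ((m:ℝ)+2)) - f ((m:ℝ)+1)) / (((m:ℝ)+2) - ((m:ℝ)+1)) = Real.log ((m:ℝ)+1) := by
      rw [show (((m:ℝ)+2) - ((m:ℝ)+1)) = 1 by ring, div_one]
      linarith [hfm2]
    have e3 : (x + 1) - ((m:ℝ) + 1) = x - m := by ring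
    rw [e1, e3] at hslope1
    rw [e2, e3] at hslope2
    rw [hfa] at hslope1 hslope2
    constructor
    · have := (le_div_iff₀ hs0).mp hslope1
      have hlog : f (x+1) = Real.log (Real.Gamma (x+1)) := rfl
      rw [hlog] at this
      linarith
    · have := (div_le_iff₀ hs0).mp hslope2
      have hlog : f (x+1) = Real.log (Real.Gamma (x+1)) := rfl
      rw [hlog] at this
      linarith

set_option maxHeartbeats 2000000 in
/-- Quantitative Stirling bound: `|log G(x) - (log c_⌊x⌋ + log 2 / 2)| ≤ 2/⌊x⌋` for `x ≥ 1`. -/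
lemma logGfun_bound {x : ℝ} (hx : 1 ≤ x) :
    |Real.log (Gfun x) - (Real.log (Stirling.stirlingSeq ⌊x⌋₊) + Real.log 2 / 2)|
      ≤ 2 / (⌊x⌋₊ : ℝ) := by
  obtain ⟨hlow, hup⟩ := logGamma_bounds hx
  set m : ℕ := ⌊x⌋₊ with hm
  set s : ℝ := x - m with hs
  clear_value s
  clear_value m
  have hx0 : (0:ℝ) < x := by linarith
  have hm1 : 1 ≤ m := hm ▸ Nat.le_floor (by exact_mod_cast hx)
  have hm0 : (0:ℝ) < m := by exact_mod_cast hm1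
  have hmx : (m:ℝ) ≤ x := hm ▸ Nat.floor_le hx0.le
  have hxm : x < m + 1 := hm ▸ Nat.lt_floor_add_one x
  have hs0 : 0 ≤ s := by simp [hs]; linarith
  have hs1 : s < 1 := by simp [hs]; linarith
  -- log m!
  have hfact : (m.factorial : ℝ) = Stirling.stirlingSeq m * (Real.sqrt (2 * m) * ((m:ℝ) / Real.exp 1) ^ m) := by
    rw [Stirling.stirlingSeq]
    field_simp
  have hcpos : 0 < Stirling.stirlingSeq m := Stirling.stirlingSeq'_pos (m - 1) |>.trans_eq (by
    congr 1; omega)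
  have hlogfact : Real.log (m.factorial) = Real.log (Stirling.stirlingSeq m)
      + (Real.log 2 + Real.log m) / 2 + m * (Real.log m - 1) := by
    rw [hfact, Real.log_mul hcpos.ne' (by positivity), Real.log_mul (by positivity) (by positivity),
      Real.log_sqrt (by positivity), Real.log_mul (by norm_num) hm0.ne', Real.log_pow,
      Real.log_div hm0.ne' (Real.exp_ne_zero 1), Real.log_exp]
    ring
  -- log Gfun
  have hGfun : Real.log (Gfun x) = Real.log (Real.Gamma (x+1)) + x - x * Real.log x - Real.log x / 2 := by
    rw [Gfun, Real.log_div (by positivity : Real.Gamma (x+1) * Real.exp x ≠ 0)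
        (by positivity : x ^ x * Real.sqrt x ≠ 0),
      Real.log_mul (Real.Gamma_pos_of_pos (by linarith)).ne' (Real.exp_ne_zero x),
      Real.log_mul (Real.rpow_pos_of_pos hx0 x).ne' (Real.sqrt_pos.mpr hx0).ne',
      Real.log_exp, Real.log_rpow hx0, Real.log_sqrt hx0.le]
    ring
  -- elementary log inequalities
  have k1 : Real.log x - Real.log m ≤ s / m := by
    have h := Real.log_le_sub_one_of_pos (show (0:ℝ) < x / m by positivity)
    rw [Real.log_div hx0.ne' hm0.ne'] at h
    have : x / m - 1 = s / m := by rw [hs]; field_simp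
    linarith
  have k2 : s / x ≤ Real.log x - Real.log m := by
    have h := Real.log_le_sub_one_of_pos (show (0:ℝ) < (m:ℝ) / x by positivity)
    rw [Real.log_div hm0.ne' hx0.ne'] at h
    have : (m:ℝ) / x - 1 = -(s / x) := by rw [hs]; field_simp; ring
    linarith
  have hxs : x = m + s := by simp [hs]
  -- the deviation D
  rw [hGfun]
  rw [abs_le]
  have hD : Real.log (Real.Gamma (x+1)) + x - x * Real.log x - Real.log x / 2
      - (Real.log (Stirling.stirlingSeq m) + Real.log 2 / 2)
      = (Real.log (Real.Gamma (x+1)) - Real.log m.factorial)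
        + (Real.log m - Real.log x) / 2 + (m * Real.log m - x * Real.log x) + s := by
    rw [hlogfact, hxs]; ring
  rw [hD]
  have hlogm1 : Real.log ((m:ℝ) + 1) - Real.log m ≤ 1 / m := by
    have h := Real.log_le_sub_one_of_pos (show (0:ℝ) < ((m:ℝ)+1) / m by positivity)
    rw [Real.log_div (by positivity) hm0.ne'] at h
    have : ((m:ℝ)+1) / m - 1 = 1 / m := by field_simp; ring
    linarith
  constructor
  · -- lower bound: D ≥ -2/m
    -- θ ≥ s log m
    have h1 : (Real.log m - Real.log x) / 2 ≥ -(s / m) / 2 := by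
      have := k1; linarith
    have h2 : s * Real.log m + (m * Real.log m - x * Real.log x) + s ≥ -(s * s / m) := by
      have hxl : x * (Real.log x - Real.log m) ≤ x * (s / m) :=
        mul_le_mul_of_nonneg_left k1 hx0.le
      have hxe : x * (s / m) = s + s * s / m := by
        rw [hxs]; field_simp
      have hkey : s * Real.log m + (m * Real.log m - x * Real.log x)
          = -(x * (Real.log x - Real.log m)) := by
        rw [hxs]; ring
      rw [hkey]
      linarith
    have hsq : s * s ≤ 1 := by nlinarith
    have hsm : s * s / m ≤ 1 / m := by gcongr
    have hsm2 : s / m ≤ 1 / m := by gcongr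
    have hmain : Real.log (Real.Gamma (x+1)) - Real.log m.factorial ≥ s * Real.log m := hlow
    have hslog : s * Real.log m ≥ 0 := mul_nonneg hs0 (Real.log_nonneg (by exact_mod_cast hm1))
    have h2m : (2:ℝ) / m = 1/m + 1/m := by ring
    have hinv : (0:ℝ) ≤ 1 / (m:ℝ) := by positivity
    linarith [hmain, h1, h2, hsm, hsm2, h2m, hinv]
  · -- upper bound: D ≤ 2/m
    have h1 : (Real.log m - Real.log x) / 2 ≤ 0 := by
      have : Real.log m ≤ Real.log x := Real.log_le_log hm0 hmx
      linarith
    -- θ ≤ s log(m+1); m log m + s log(m+1) - x log x + s ≤ s/m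
    have h2 : s * Real.log ((m:ℝ)+1) + m * Real.log m - x * Real.log x + s ≤ 2 / m := by
      have e : s * Real.log ((m:ℝ)+1) + m * Real.log m
          = x * Real.log m + s * (Real.log ((m:ℝ)+1) - Real.log m) := by
        rw [hxs]; ring
      rw [e]
      have hb1 : s * (Real.log ((m:ℝ)+1) - Real.log m) ≤ 1 / m := by
        have hnn : 0 ≤ Real.log ((m:ℝ)+1) - Real.log m := by
          have : Real.log m ≤ Real.log ((m:ℝ)+1) := Real.log_le_log hm0 (by linarith)
          linarith
        nlinarith
      have hb2 : x * Real.log m - x * Real.log x + s ≤ 0 := by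
        have := mul_le_mul_of_nonneg_left k2 hx0.le
        have hxx : x * (s / x) = s := by field_simp
        nlinarith
      have : (1:ℝ)/m ≤ 2/m := by gcongr; norm_num
      linarith
    linarith [hup, h1, h2]

lemma Gfun_tendsto : Tendsto Gfun atTop (𝓝 (Real.sqrt (2 * π))) := by
  have hπ : 0 < Real.sqrt π := Real.sqrt_pos.mpr Real.pi_pos
  have hL : Real.log (Real.sqrt π) + Real.log 2 / 2 = Real.log (Real.sqrt (2 * π)) := by
    rw [Real.log_sqrt Real.pi_pos.le, Real.log_sqrt (by positivity),
      Real.log_mul (by norm_num) Real.pi_pos.ne']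
    ring
  -- h(x) = log c_⌊x⌋ + log 2 / 2 tendsto log √(2π)
  have hc : Tendsto (fun m : ℕ => Real.log (Stirling.stirlingSeq m) + Real.log 2 / 2)
      atTop (𝓝 (Real.log (Real.sqrt (2 * π)))) := by
    rw [← hL]
    exact ((Real.continuousAt_log hπ.ne').tendsto.comp Stirling.tendsto_stirlingSeq_sqrt_pi).add
      tendsto_const_nhds
  have hh : Tendsto (fun x : ℝ => Real.log (Stirling.stirlingSeq ⌊x⌋₊) + Real.log 2 / 2)
      atTop (𝓝 (Real.log (Real.sqrt (2 * π)))) := hc.comp tendsto_nat_floor_atTop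
  have herr : Tendsto (fun x : ℝ => 2 / (⌊x⌋₊ : ℝ)) atTop (𝓝 0) := by
    have : Tendsto (fun m : ℕ => 2 / (m : ℝ)) atTop (𝓝 0) :=
      tendsto_const_div_atTop_nhds_zero_nat 2
    exact this.comp tendsto_nat_floor_atTop
  have hdiff : Tendsto (fun x : ℝ => Real.log (Gfun x)
      - (Real.log (Stirling.stirlingSeq ⌊x⌋₊) + Real.log 2 / 2)) atTop (𝓝 0) := by
    apply squeeze_zero_norm' _ herr
    filter_upwards [eventually_ge_atTop (1:ℝ)] with x hx
    exact logGfun_bound hx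
  have hlog : Tendsto (fun x : ℝ => Real.log (Gfun x)) atTop (𝓝 (Real.log (Real.sqrt (2 * π)))) := by
    have := hh.add hdiff
    simpa using this
  have hexp : Tendsto (fun x : ℝ => Real.exp (Real.log (Gfun x))) atTop
      (𝓝 (Real.exp (Real.log (Real.sqrt (2 * π))))) := (Real.continuous_exp.tendsto _).comp hlog
  rw [Real.exp_log (by positivity : (0:ℝ) < Real.sqrt (2 * π))] at hexp
  apply hexp.congr'
  filter_upwards [eventually_gt_atTop (0:ℝ)] with x hx
  have h1 : 0 < Real.Gamma (x + 1) := Real.Gamma_pos_of_pos (by linarith)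
  have h2 : (0:ℝ) < x ^ x := Real.rpow_pos_of_pos hx x
  have h3 : 0 < Real.sqrt x := Real.sqrt_pos.mpr hx
  exact Real.exp_log (by rw [Gfun]; positivity)

lemma Pn_continuousAt (n : ℕ) {x : ℝ} (hx0 : 0 < x) (hx1 : x < 1) :
    ContinuousAt (Pn n) x := by
  have hn0 : (0:ℝ) ≤ (n:ℝ) := Nat.cast_nonneg n
  have hnx : (0:ℝ) ≤ (n:ℝ) * x := mul_nonneg hn0 hx0.le
  have hnx2 : (0:ℝ) ≤ (n:ℝ) * (1 - x) := mul_nonneg hn0 (by linarith)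
  have hp1 : (0:ℝ) < (n:ℝ) * x + 1 := by linarith
  have hp2 : (0:ℝ) < (n:ℝ) - (n:ℝ) * x + 1 := by nlinarith
  have hG1 : ContinuousAt (fun x : ℝ => Real.Gamma ((n:ℝ) * x + 1)) x := by
    show ContinuousAt (Real.Gamma ∘ fun x : ℝ => (n:ℝ) * x + 1) x
    apply ContinuousAt.comp _ (by fun_prop)
    apply (Real.differentiableAt_Gamma _).continuousAt
    intro m
    have hm : (0:ℝ) ≤ (m:ℝ) := Nat.cast_nonneg m
    intro h
    rw [h] at hp1
    linarith
  have hG2 : ContinuousAt (fun x : ℝ => Real.Gamma ((n:ℝ) - (n:ℝ) * x + 1)) x := by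
    show ContinuousAt (Real.Gamma ∘ fun x : ℝ => (n:ℝ) - (n:ℝ) * x + 1) x
    apply ContinuousAt.comp _ (by fun_prop)
    apply (Real.differentiableAt_Gamma _).continuousAt
    intro m
    have hm : (0:ℝ) ≤ (m:ℝ) := Nat.cast_nonneg m
    intro h
    rw [h] at hp2
    linarith
  have hr1 : ContinuousAt (fun x : ℝ => x ^ ((n:ℝ) * x)) x :=
    ContinuousAt.rpow continuousAt_id (by fun_prop) (Or.inl hx0.ne')
  have hr2 : ContinuousAt (fun x : ℝ => (1 - x) ^ ((n:ℝ) * (1 - x))) x := by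
    apply ContinuousAt.rpow (by fun_prop) (by fun_prop)
    left
    intro h
    have hx1' : x = 1 := by linarith [sub_eq_zero.mp h]
    linarith
  have hGpos1 : 0 < Real.Gamma ((n:ℝ) * x + 1) := Real.Gamma_pos_of_pos hp1
  have hGpos2 : 0 < Real.Gamma ((n:ℝ) - (n:ℝ) * x + 1) := Real.Gamma_pos_of_pos hp2
  have hgb : ContinuousAt (fun x : ℝ => gbinom n ((n:ℝ) * x)) x := by
    unfold gbinom
    exact (continuousAt_const.div (hG1.mul hG2) (by positivity))
  exact (hgb.mul hr1).mul hr2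


set_option maxHeartbeats 1000000 in
lemma ratio_tendsto {c : ℝ} (hc : 0 < c) :
    Tendsto (fun n : ℕ => Pn n (c / (2 * π * (n:ℝ)) ^ ((1:ℝ)/3)) / (c / (2 * π * (n:ℝ)) ^ ((1:ℝ)/3)))
      atTop (𝓝 (1 / Real.sqrt (c ^ 3))) := by
  set y : ℕ → ℝ := fun n => c / (2 * π * (n:ℝ)) ^ ((1:ℝ)/3) with hy
  have h2π : (0:ℝ) < 2 * π := by positivity
  have hbase : Tendsto (fun n : ℕ => 2 * π * (n:ℝ)) atTop atTop :=
    (tendsto_natCast_atTop_atTop).const_mul_atTop h2π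
  have hLtend : Tendsto (fun n : ℕ => (2 * π * (n:ℝ)) ^ ((1:ℝ)/3)) atTop atTop :=
    (tendsto_rpow_atTop (by norm_num)).comp hbase
  have hy0 : Tendsto y atTop (𝓝 0) := tendsto_const_nhds.div_atTop hLtend
  -- n * y n → ∞
  have hny : Tendsto (fun n : ℕ => (n:ℝ) * y n) atTop atTop := by
    have haux : Tendsto (fun n : ℕ => c / (2*π) ^ ((1:ℝ)/3) * ((n:ℝ) ^ ((2:ℝ)/3))) atTop atTop := by
      apply Tendsto.const_mul_atTop (by positivity)
      exact (tendsto_rpow_atTop (by norm_num)).comp tendsto_natCast_atTop_atTop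
    apply haux.congr'
    filter_upwards [eventually_ge_atTop 1] with n hn
    have hn0 : (0:ℝ) < n := by exact_mod_cast hn
    rw [hy]
    have hsplit : (2 * π * (n:ℝ)) ^ ((1:ℝ)/3) = (2*π) ^ ((1:ℝ)/3) * (n:ℝ) ^ ((1:ℝ)/3) :=
      Real.mul_rpow h2π.le hn0.le
    have hnn : (n:ℝ) ^ ((2:ℝ)/3) * (n:ℝ) ^ ((1:ℝ)/3) = (n:ℝ) := by
      rw [← Real.rpow_add hn0]
      norm_num
    have h1 : ((2*π) ^ ((1:ℝ)/3)) ≠ 0 := by positivity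
    have h2 : ((n:ℝ) ^ ((1:ℝ)/3)) ≠ 0 := by positivity
    simp only
    rw [hsplit]
    field_simp
    linear_combination hnn
  -- n * (1 - y n) → ∞
  have hyhalf : ∀ᶠ n : ℕ in atTop, y n < 1/2 := hy0.eventually (gt_mem_nhds (by norm_num))
  have hb : Tendsto (fun n : ℕ => (n:ℝ) * (1 - y n)) atTop atTop := by
    apply tendsto_atTop_mono' atTop ?_ (tendsto_natCast_atTop_atTop.atTop_div_const (by norm_num : (0:ℝ) < 2))
    filter_upwards [hyhalf] with n hn
    have hn0 : (0:ℝ) ≤ (n:ℝ) := Nat.cast_nonneg n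
    nlinarith
  have t1 : Tendsto (fun n : ℕ => Gfun n) atTop (𝓝 (Real.sqrt (2*π))) :=
    Gfun_tendsto.comp tendsto_natCast_atTop_atTop
  have t2 : Tendsto (fun n : ℕ => Gfun ((n:ℝ) * y n)) atTop (𝓝 (Real.sqrt (2*π))) :=
    Gfun_tendsto.comp hny
  have t3 : Tendsto (fun n : ℕ => Gfun ((n:ℝ) * (1 - y n))) atTop (𝓝 (Real.sqrt (2*π))) :=
    Gfun_tendsto.comp hb
  have hsq : (0:ℝ) < Real.sqrt (2*π) := Real.sqrt_pos.mpr h2π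
  have hN : Tendsto (fun n : ℕ => Real.sqrt (2*π) * Gfun n / (Gfun ((n:ℝ) * y n) * Gfun ((n:ℝ) * (1 - y n))))
      atTop (𝓝 1) := by
    have := ((tendsto_const_nhds (x := Real.sqrt (2*π)) (f := atTop (α := ℕ))).mul t1).div
      (t2.mul t3) (by positivity)
    convert this using 2
    field_simp
    rfl
    exact (div_self (by positivity)).symm
  have hden : Tendsto (fun n : ℕ => Real.sqrt (c ^ 3 * (1 - y n))) atTop (𝓝 (Real.sqrt (c ^ 3))) := by
    have harg : Tendsto (fun n : ℕ => c ^ 3 * (1 - y n)) atTop (𝓝 (c ^ 3)) := by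
      simpa using ((tendsto_const_nhds (x := (1:ℝ)) (f := atTop (α := ℕ))).sub hy0).const_mul (c ^ 3)
    exact (Real.continuous_sqrt.tendsto _).comp harg
  have hc3 : (0:ℝ) < Real.sqrt (c ^ 3) := Real.sqrt_pos.mpr (by positivity)
  have hfull := hN.div hden hc3.ne'
  apply hfull.congr'
  filter_upwards [hyhalf, eventually_ge_atTop 1] with n hn2 hn1
  simp only [Pi.div_apply]
  show Real.sqrt (2*π) * Gfun (n:ℝ) / (Gfun ((n:ℝ) * y n) * Gfun ((n:ℝ) * (1 - y n)))
      / Real.sqrt (c ^ 3 * (1 - y n)) = Pn n (y n) / y n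
  have hn0 : (0:ℝ) < n := by exact_mod_cast hn1
  have hL : (0:ℝ) < (2 * π * (n:ℝ)) ^ ((1:ℝ)/3) := Real.rpow_pos_of_pos (by positivity) _
  have hy0' : 0 < y n := by rw [hy]; positivity
  have hy1' : y n < 1 := lt_trans hn2 (by norm_num)
  have hcube : ((2 * π * (n:ℝ)) ^ ((1:ℝ)/3)) ^ (3:ℕ) = 2 * π * (n:ℝ) := by
    rw [← Real.rpow_natCast ((2 * π * (n:ℝ)) ^ ((1:ℝ)/3)) 3, ← Real.rpow_mul (by positivity)]
    norm_num
  have hkey : (n:ℝ) * (y n) ^ (3:ℕ) = c ^ 3 / (2*π) := by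
    rw [hy]
    simp only
    rw [div_pow, hcube]
    field_simp
  have hPn := Pn_eq n (by omega) hy0' hy1'
  rw [hPn]
  have hGa : 0 < Gfun ((n:ℝ) * y n) := Gfun_pos (by positivity)
  have hGb : 0 < Gfun ((n:ℝ) * (1 - y n)) := Gfun_pos (by nlinarith)
  have hGn : 0 < Gfun (n:ℝ) := Gfun_pos hn0
  have hsqrt : Real.sqrt ((n:ℝ) * y n * (1 - y n)) * y n
      = Real.sqrt (c ^ 3 * (1 - y n)) / Real.sqrt (2*π) := by
    have e1 : Real.sqrt ((n:ℝ) * y n * (1 - y n) * (y n)^2)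
        = Real.sqrt ((n:ℝ) * y n * (1 - y n)) * y n := by
      rw [Real.sqrt_mul (by nlinarith [mul_pos hn0 hy0'] : (0:ℝ) ≤ (n:ℝ) * y n * (1 - y n)) ((y n)^2),
        Real.sqrt_sq hy0'.le]
    have e2 : (n:ℝ) * y n * (1 - y n) * (y n)^2 = (c ^ 3 * (1 - y n)) / (2*π) := by
      have h3 : (n:ℝ) * y n * (1 - y n) * (y n)^2 = ((n:ℝ) * (y n)^3) * (1 - y n) := by ring
      rw [h3, hkey]
      ring
    rw [← e1, e2, Real.sqrt_div (by nlinarith [pow_pos hc 3] : (0:ℝ) ≤ c ^ 3 * (1 - y n))]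
  have hs2 : 0 < Real.sqrt (c ^ 3 * (1 - y n)) := Real.sqrt_pos.mpr (by nlinarith [pow_pos hc 3])
  rw [eq_comm, div_div, mul_assoc, hsqrt]
  field_simp

/-- If for every positive integer `n`, `p n ∈ (0,1)` is the unique fixed point of `P_n`
in `(0,1)`, then `p_n ~ (2πn)^{-1/3}` as `n → ∞`, i.e. `lim p_n·(2πn)^{1/3} = 1`. -/
theorem fixed_point_asymptotics (p : ℕ → ℝ)
    (hfix : ∀ n : ℕ, 0 < n →
      p n ∈ Set.Ioo (0:ℝ) 1 ∧ Pn n (p n) = p n ∧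
        ∀ q ∈ Set.Ioo (0:ℝ) 1, Pn n q = q → q = p n) :
    Tendsto (fun n : ℕ => p n * (2 * π * n) ^ ((1:ℝ) / 3)) atTop (𝓝 1) := by
  rw [Metric.tendsto_atTop]
  intro ε hε
  set δ : ℝ := min (ε/2) (1/2) with hδ
  have hδ0 : 0 < δ := lt_min (by linarith) (by norm_num)
  have hδhalf : δ ≤ 1/2 := min_le_right _ _
  have hδε : δ < ε := lt_of_le_of_lt (min_le_left _ _) (by linarith)
  have hc1 : (0:ℝ) < 1 - δ := by linarith
  have hc2 : (0:ℝ) < 1 + δ := by linarith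
  have r1 := ratio_tendsto hc1
  have r2 := ratio_tendsto hc2
  -- limit of first ratio is > 1
  have hgt : (1:ℝ) < 1 / Real.sqrt ((1 - δ) ^ 3) := by
    have h13 : (1 - δ) ^ 3 < 1 := pow_lt_one₀ hc1.le (by linarith) (by norm_num)
    have hs : Real.sqrt ((1 - δ) ^ 3) < 1 := by
      have := Real.sqrt_lt_sqrt (by positivity : (0:ℝ) ≤ (1 - δ)^3) h13
      simpa using this
    exact one_lt_one_div (Real.sqrt_pos.mpr (by positivity)) hs
  have hlt : 1 / Real.sqrt ((1 + δ) ^ 3) < 1 := by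
    have h13 : (1:ℝ) < (1 + δ) ^ 3 := by nlinarith [mul_pos (mul_pos hδ0 hδ0) hδ0, mul_pos hδ0 hδ0]
    have hs : (1:ℝ) < Real.sqrt ((1 + δ) ^ 3) := by
      have := Real.sqrt_lt_sqrt (by norm_num : (0:ℝ) ≤ 1) h13
      simpa using this
    rw [div_lt_one (by positivity)]
    exact hs
  have ev1 : ∀ᶠ n : ℕ in atTop,
      1 < Pn n ((1 - δ) / (2 * π * (n:ℝ)) ^ ((1:ℝ)/3)) / ((1 - δ) / (2 * π * (n:ℝ)) ^ ((1:ℝ)/3)) :=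
    r1.eventually (lt_mem_nhds hgt)
  have ev2 : ∀ᶠ n : ℕ in atTop,
      Pn n ((1 + δ) / (2 * π * (n:ℝ)) ^ ((1:ℝ)/3)) / ((1 + δ) / (2 * π * (n:ℝ)) ^ ((1:ℝ)/3)) < 1 :=
    r2.eventually (gt_mem_nhds hlt)
  have hbase : Tendsto (fun n : ℕ => 2 * π * (n:ℝ)) atTop atTop :=
    (tendsto_natCast_atTop_atTop).const_mul_atTop (by positivity)
  have hLtend : Tendsto (fun n : ℕ => (2 * π * (n:ℝ)) ^ ((1:ℝ)/3)) atTop atTop :=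
    (tendsto_rpow_atTop (by norm_num)).comp hbase
  have ev3 : ∀ᶠ n : ℕ in atTop, (1 + δ) / (2 * π * (n:ℝ)) ^ ((1:ℝ)/3) < 1/2 :=
    (tendsto_const_nhds.div_atTop hLtend).eventually (gt_mem_nhds (by norm_num))
  have hev : ∀ᶠ n : ℕ in atTop, dist (p n * (2 * π * (n:ℝ)) ^ ((1:ℝ)/3)) 1 < ε := by
    filter_upwards [ev1, ev2, ev3, eventually_ge_atTop 1] with n h1 h2 h3 hn1
    have hn0 : (0:ℝ) < n := by exact_mod_cast hn1
    have hL : (0:ℝ) < (2 * π * (n:ℝ)) ^ ((1:ℝ)/3) := Real.rpow_pos_of_pos (by positivity) _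
    set L : ℝ := (2 * π * (n:ℝ)) ^ ((1:ℝ)/3) with hLdef
    set x1 : ℝ := (1 - δ) / L with hx1def
    set x2 : ℝ := (1 + δ) / L with hx2def
    have hx1pos : 0 < x1 := by positivity
    have hx2pos : 0 < x2 := by positivity
    have hx12 : x1 ≤ x2 := by
      rw [hx1def, hx2def]
      gcongr
      linarith
    have hx21 : x2 < 1 := lt_trans h3 (by norm_num)
    have hP1 : x1 < Pn n x1 := (one_lt_div hx1pos).mp h1
    have hP2 : Pn n x2 < x2 := (div_lt_one hx2pos).mp h2
    -- IVT for g = Pn n - id on [x1, x2]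
    have cont : ContinuousOn (fun x : ℝ => Pn n x - x) (Set.Icc x1 x2) := by
      intro x hx
      have hx0 : 0 < x := lt_of_lt_of_le hx1pos hx.1
      have hx1' : x < 1 := lt_of_le_of_lt hx.2 hx21
      exact ((Pn_continuousAt n hx0 hx1').sub continuousAt_id).continuousWithinAt
    have hivt := intermediate_value_Icc' hx12 cont
    have h0mem : (0:ℝ) ∈ Set.Icc (Pn n x2 - x2) (Pn n x1 - x1) :=
      ⟨by linarith, by linarith⟩
    obtain ⟨q, hqmem, hq0⟩ := hivt h0mem
    have hqfix : Pn n q = q := by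
      have := hq0
      simp only at this
      linarith [this]
    have hqIoo : q ∈ Set.Ioo (0:ℝ) 1 :=
      ⟨lt_of_lt_of_le hx1pos hqmem.1, lt_of_le_of_lt hqmem.2 hx21⟩
    obtain ⟨hpmem, hpfix, huniq⟩ := hfix n (by omega)
    have hqp : q = p n := huniq q hqIoo hqfix
    rw [hqp] at hqmem
    -- x1 ≤ p n ≤ x2 ⟹ 1 - δ ≤ p n * L ≤ 1 + δ
    have hm1 : (1 - δ) ≤ p n * L := by
      have := mul_le_mul_of_nonneg_right hqmem.1 hL.le
      rwa [hx1def, div_mul_cancel₀ _ hL.ne'] at this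
    have hm2 : p n * L ≤ 1 + δ := by
      have := mul_le_mul_of_nonneg_right hqmem.2 hL.le
      rwa [hx2def, div_mul_cancel₀ _ hL.ne'] at this
    rw [Real.dist_eq]
    have : |p n * L - 1| ≤ δ := abs_le.mpr ⟨by linarith, by linarith⟩
    exact lt_of_le_of_lt this hδε
  obtain ⟨N, hN⟩ := eventually_atTop.mp hev
  exact ⟨N, hN⟩
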